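/- arXiv:2104.07289 — 2 statements merged into one kernel-verified Lean document; each statement's English description precedes it below -/
import Mathlib

section
/- Consider the replicator system dz_i/dτ = Θ₂ z_i (-ν_i + Σ_j ν_j z_j) on the simplex with Θ₂ > 0 and ν_1 < ν_2 ≤ ... ≤ ν_N. Then every solution with z_1(0) > 0 and z_i(0) ≥ 0, Σ z_i(0) = 1 converges to E_1 = (1,0,...,0); i.e., the strain with the smallest clearance rate perturbation (longest duration of carriage) is the unique survivor. -/
open Filter Finset

/-- Competitive exclusion for variation in single-infection
clearance rates only: for `zᵢ' = Θ₂ zᵢ (-νᵢ + Σⱼ νⱼ zⱼ)` on the simplex with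
`ν 0 < ν 1 ≤ … ≤ ν (N-1)`, every solution with `z₀(0) > 0` converges to
`E₁ = (1,0,…,0)`: the strain with smallest clearance perturbation survives. -/
theorem competitive_exclusion_clearance
    (N : ℕ) (hN : 1 ≤ N) (Θ₂ : ℝ) (hΘ₂ : 0 < Θ₂) (ν : Fin N → ℝ)
    (hν_mono : ∀ i j : Fin N, i ≤ j → ν i ≤ ν j)
    (hν_bot : ∀ j : Fin N, j ≠ ⟨0, hN⟩ → ν ⟨0, hN⟩ < ν j)
    (E₁ : Fin N → ℝ) (hE₁ : E₁ = fun i => if i = ⟨0, hN⟩ then 1 else 0)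
    (z : ℝ → Fin N → ℝ)
    (hz : ∀ (t : ℝ) (i : Fin N), HasDerivAt (fun s => z s i)
      (Θ₂ * z t i * (-ν i + ∑ j, ν j * z t j)) t)
    (hz0 : (∀ i, 0 ≤ z 0 i) ∧ ∑ i, z 0 i = 1 ∧ 0 < z 0 ⟨0, hN⟩) :
    Tendsto z atTop (nhds E₁) := by
  obtain ⟨hnn, hsum0, hpos⟩ := hz0
  set i0 : Fin N := ⟨0, hN⟩ with hi0
  set S : ℝ → ℝ := fun t => ∑ j, ν j * z t j with hS
  have hdz : ∀ i, Differentiable ℝ fun s => z s i := fun i t => (hz t i).differentiableAt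
  have hcz : ∀ i, Continuous fun t => z t i := fun i => (hdz i).continuous
  have hScont : Continuous S := by
    exact continuous_finset_sum _ fun j _ => (continuous_const.mul (hcz j))
  set φ : ℝ → ℝ := fun t => ∫ s in (0:ℝ)..t, S s with hφdef
  have hφ : ∀ t, HasDerivAt φ (S t) t := fun t =>
    (hScont.integral_hasStrictDerivAt 0 t).hasDerivAt
  have hφ0 : φ 0 = 0 := intervalIntegral.integral_same
  -- integrating factor: z t i * exp (Θ₂*ν i*t - Θ₂*φ t) is constant
  have hkey : ∀ i t, z t i * Real.exp (Θ₂ * ν i * t - Θ₂ * φ t) = z 0 i := by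
    intro i t
    set u : ℝ → ℝ := fun t => z t i * Real.exp (Θ₂ * ν i * t - Θ₂ * φ t) with hu
    have hder : ∀ s, HasDerivAt u 0 s := by
      intro s
      have hg : HasDerivAt (fun t => Θ₂ * ν i * t - Θ₂ * φ t) (Θ₂ * ν i - Θ₂ * S s) s := by
        have := ((hasDerivAt_id s).const_mul (Θ₂ * ν i)).fun_sub ((hφ s).const_mul Θ₂)
        simpa using this
      have he := hg.exp
      have := (hz s i).fun_mul he
      convert this using 1
      · rfl
      · rfl
      simp only [hS]
      ring
    have hc : ∀ a b : ℝ, u a = u b :=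
      is_const_of_deriv_eq_zero (fun s => (hder s).differentiableAt)
        (fun s => (hder s).deriv)
    have := hc t 0
    simpa [u, hφ0] using this
  -- sum is conserved
  have hsum : ∀ t, ∑ i, z t i = 1 := by
    intro t
    set g : ℝ → ℝ := fun t => (∑ i, z t i - 1) * Real.exp (-(Θ₂ * φ t)) with hg
    have hder : ∀ s, HasDerivAt g 0 s := by
      intro s
      have h1 : HasDerivAt (fun t => ∑ i, z t i - 1)
          (∑ i, Θ₂ * z s i * (-ν i + S s)) s := by
        exact (HasDerivAt.fun_sum fun i _ => hz s i).sub_const 1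
      have h2 : HasDerivAt (fun t => Real.exp (-(Θ₂ * φ t)))
          (Real.exp (-(Θ₂ * φ s)) * (-(Θ₂ * S s))) s :=
        (((hφ s).const_mul Θ₂).neg).exp
      have := h1.fun_mul h2
      convert this using 1
      · rfl
      · rfl
      have hsum' : ∑ i, Θ₂ * z s i * (-ν i + S s)
          = Θ₂ * (S s * (∑ i, z s i) - S s) := by
        have : ∀ i ∈ Finset.univ, Θ₂ * z s i * (-ν i + S s)
            = Θ₂ * (z s i * S s) - Θ₂ * (ν i * z s i) := by
          intro i _; ring
        rw [Finset.sum_congr rfl this, Finset.sum_sub_distrib, ← Finset.mul_sum,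
          ← Finset.mul_sum, ← Finset.sum_mul, hS]
        ring
      rw [hsum']
      ring
    have hc : ∀ a b : ℝ, g a = g b :=
      is_const_of_deriv_eq_zero (fun s => (hder s).differentiableAt)
        (fun s => (hder s).deriv)
    have h0 : g 0 = 0 := by simp [g, hφ0, hsum0]
    have ht : g t = 0 := by rw [hc t 0, h0]
    have hexp : Real.exp (-(Θ₂ * φ t)) ≠ 0 := Real.exp_ne_zero _
    have := mul_eq_zero.mp ht
    rcases this with h | h
    · linarith [sub_eq_zero.mp h]
    · exact absurd h hexp
  -- the denominator
  set D : ℝ → ℝ := fun t => ∑ j, z 0 j * Real.exp (Θ₂ * (ν i0 - ν j) * t) with hD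
  have hDeq : ∀ t, D t = Real.exp (Θ₂ * ν i0 * t - Θ₂ * φ t) := by
    intro t
    have : D t = Real.exp (Θ₂ * ν i0 * t - Θ₂ * φ t) * ∑ j, z t j := by
      rw [Finset.mul_sum]
      apply Finset.sum_congr rfl
      intro j _
      rw [← hkey j t, mul_assoc, ← Real.exp_add,
        show Θ₂ * ν j * t - Θ₂ * φ t + Θ₂ * (ν i0 - ν j) * t
          = Θ₂ * ν i0 * t - Θ₂ * φ t from by ring, mul_comm]
    rw [this, hsum t, mul_one]
  have hDpos : ∀ t, 0 < D t := fun t => by rw [hDeq t]; exact Real.exp_pos _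
  -- explicit formula
  have hform : ∀ i t, z t i = z 0 i * Real.exp (Θ₂ * (ν i0 - ν i) * t) / D t := by
    intro i t
    rw [eq_div_iff (hDpos t).ne', hDeq t, ← hkey i t, mul_assoc (z t i), ← Real.exp_add,
      show Θ₂ * ν i * t - Θ₂ * φ t + Θ₂ * (ν i0 - ν i) * t
        = Θ₂ * ν i0 * t - Θ₂ * φ t from by ring]
  -- limit of D
  have hD_lim : Tendsto D atTop (nhds (z 0 i0)) := by
    have : Tendsto D atTop (nhds (∑ j, if j = i0 then z 0 i0 else 0)) := by
      apply tendsto_finset_sum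
      intro j _
      by_cases hj : j = i0
      · subst hj
        simp only [if_pos rfl, sub_self, mul_zero, zero_mul, Real.exp_zero, mul_one]
        exact tendsto_const_nhds
      · simp only [if_neg hj]
        have hc : Θ₂ * (ν i0 - ν j) < 0 := by
          have := hν_bot j hj
          nlinarith
        have h1 : Tendsto (fun t : ℝ => Θ₂ * (ν i0 - ν j) * t) atTop atBot := by
          exact Tendsto.const_mul_atTop_of_neg hc tendsto_id
        have h2 : Tendsto (fun t : ℝ => Real.exp (Θ₂ * (ν i0 - ν j) * t)) atTop (nhds 0) :=
          Real.tendsto_exp_atBot.comp h1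
        simpa using h2.const_mul (z 0 j)
    simpa using this
  -- conclude
  rw [tendsto_pi_nhds]
  intro i
  have hnum : Tendsto (fun t => z 0 i * Real.exp (Θ₂ * (ν i0 - ν i) * t)) atTop
      (nhds (if i = i0 then z 0 i0 else 0)) := by
    by_cases hi : i = i0
    · subst hi
      simp only [if_pos rfl, sub_self, mul_zero, zero_mul, Real.exp_zero, mul_one]
      exact tendsto_const_nhds
    · simp only [if_neg hi]
      have hc : Θ₂ * (ν i0 - ν i) < 0 := by
        have := hν_bot i hi
        nlinarith
      have h1 : Tendsto (fun t : ℝ => Θ₂ * (ν i0 - ν i) * t) atTop atBot :=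
        Tendsto.const_mul_atTop_of_neg hc tendsto_id
      have h2 : Tendsto (fun t : ℝ => Real.exp (Θ₂ * (ν i0 - ν i) * t)) atTop (nhds 0) :=
        Real.tendsto_exp_atBot.comp h1
      simpa using h2.const_mul (z 0 i)
  have hdiv := hnum.div hD_lim hpos.ne'
  have : Tendsto (fun t => z t i) atTop (nhds ((if i = i0 then z 0 i0 else 0) / z 0 i0)) := by
    apply hdiv.congr
    intro t
    exact (hform i t).symm
  convert this using 2
  rw [hE₁]
  by_cases hi : i = i0 <;> simp [hi, hpos.ne']
end

section
/- Consider the replicator system dz_i/dτ = z_i (Θ₁(b_i - Σ_j b_j z_j) + Θ₂(-ν_i + Σ_j ν_j z_j)) on the simplex with Θ₁, Θ₂ > 0. If strain 1 satisfies Θ₁b_1 - Θ₂ν_1 > Θ₁b_j - Θ₂ν_j for all j ≠ 1, then V(z) = -ln z_1 is a Lyapunov function and every solution with z_1(0) > 0 converges to E_1 = (1,0,...,0). In particular, the winner is determined by the quantity Θ₁b_i - Θ₂ν_i, not by the basic reproduction numbers R_{0,i} alone. -/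
open Filter Finset

lemma ode_exp_sol (y a : ℝ → ℝ) (ha : Continuous a)
    (hy : ∀ t, HasDerivAt y (a t * y t) t) (t : ℝ) :
    y t = y 0 * Real.exp (∫ s in (0:ℝ)..t, a s) := by
  set A : ℝ → ℝ := fun u => ∫ s in (0:ℝ)..u, a s with hAdef
  have hA : ∀ u, HasDerivAt A (a u) u := fun u =>
    intervalIntegral.integral_hasDerivAt_right (ha.intervalIntegrable 0 u)
      (ha.stronglyMeasurableAtFilter _ _) ha.continuousAt
  set F : ℝ → ℝ := fun u => y u * Real.exp (-A u) with hFdef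
  have hF : ∀ u, HasDerivAt F 0 u := by
    intro u
    have h1 : HasDerivAt (fun v => Real.exp (-A v)) (Real.exp (-A u) * (-a u)) u :=
      ((hA u).neg).exp
    have : HasDerivAt F (a u * y u * Real.exp (-A u) + y u * (Real.exp (-A u) * -a u)) u :=
      (hy u).fun_mul h1
    convert this using 1
    ring
  have hconst : ∀ u, F u = F 0 := by
    intro u
    have hdiff : Differentiable ℝ F := fun v => (hF v).differentiableAt
    have hderiv : ∀ v, deriv F v = 0 := fun v => (hF v).deriv
    exact is_const_of_deriv_eq_zero hdiff hderiv u 0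
  have hA0 : A 0 = 0 := intervalIntegral.integral_same
  have h := hconst t
  simp only [hFdef, hA0, neg_zero, Real.exp_zero, mul_one] at h
  have hne : Real.exp (-A t) ≠ 0 := Real.exp_ne_zero _
  field_simp [Real.exp_neg] at h
  rw [← h, mul_assoc, ← Real.exp_add, show A t = ∫ s in (0:ℝ)..t, a s from rfl,
    neg_add_cancel, Real.exp_zero, mul_one]


/-- Combined variation in transmission and clearance rates:
for `zᵢ' = zᵢ (Θ₁(bᵢ - Σⱼ bⱼzⱼ) + Θ₂(-νᵢ + Σⱼ νⱼzⱼ))` on the simplex, if strain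
`0` strictly maximizes `Θ₁bᵢ - Θ₂νᵢ`, then `V(z) = -ln z₀` is a Lyapunov
function and every solution with `z₀(0) > 0` converges to `E₁ = (1,0,…,0)`. -/
theorem competitive_exclusion_combined
    (N : ℕ) (hN : 1 ≤ N) (Θ₁ Θ₂ : ℝ) (hΘ₁ : 0 < Θ₁) (hΘ₂ : 0 < Θ₂)
    (b ν : Fin N → ℝ)
    (hmax : ∀ j : Fin N, j ≠ ⟨0, hN⟩ →
      Θ₁ * b j - Θ₂ * ν j < Θ₁ * b ⟨0, hN⟩ - Θ₂ * ν ⟨0, hN⟩)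
    (E₁ : Fin N → ℝ) (hE₁ : E₁ = fun i => if i = ⟨0, hN⟩ then 1 else 0)
    (z : ℝ → Fin N → ℝ)
    (hz : ∀ (t : ℝ) (i : Fin N), HasDerivAt (fun s => z s i)
      (z t i * (Θ₁ * (b i - ∑ j, b j * z t j)
        + Θ₂ * (-ν i + ∑ j, ν j * z t j))) t)
    (hz0 : (∀ i, 0 ≤ z 0 i) ∧ ∑ i, z 0 i = 1 ∧ 0 < z 0 ⟨0, hN⟩) :
    -- Lyapunov property of V = -ln z₀
    (∀ w : Fin N → ℝ, 0 < w ⟨0, hN⟩ → (∀ i, 0 ≤ w i) → ∑ i, w i = 1 →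
      -(Θ₁ * (b ⟨0, hN⟩ - ∑ j, b j * w j)
        + Θ₂ * (-ν ⟨0, hN⟩ + ∑ j, ν j * w j)) ≤ 0 ∧
      (-(Θ₁ * (b ⟨0, hN⟩ - ∑ j, b j * w j)
        + Θ₂ * (-ν ⟨0, hN⟩ + ∑ j, ν j * w j)) = 0 ↔ w = E₁)) ∧
    -- convergence to E₁
    Tendsto z atTop (nhds E₁) := by
  set i0 : Fin N := ⟨0, hN⟩ with hi0
  obtain ⟨hnn0, hsum0, hpos0⟩ := hz0
  constructor
  · -- Lyapunov part
    intro w hw0 hwnn hwsum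
    have key : -(Θ₁ * (b i0 - ∑ j, b j * w j) + Θ₂ * (-ν i0 + ∑ j, ν j * w j))
        = ∑ j, w j * ((Θ₁ * b j - Θ₂ * ν j) - (Θ₁ * b i0 - Θ₂ * ν i0)) := by
      have expand : ∑ j, w j * ((Θ₁ * b j - Θ₂ * ν j) - (Θ₁ * b i0 - Θ₂ * ν i0))
          = Θ₁ * (∑ j, b j * w j) - Θ₂ * (∑ j, ν j * w j)
            - (Θ₁ * b i0 - Θ₂ * ν i0) * (∑ j, w j) := by
        rw [Finset.mul_sum, Finset.mul_sum, Finset.mul_sum,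
          ← Finset.sum_sub_distrib, ← Finset.sum_sub_distrib]
        exact Finset.sum_congr rfl fun j _ => by ring
      rw [expand, hwsum]; ring
    have hterm : ∀ j : Fin N,
        w j * ((Θ₁ * b j - Θ₂ * ν j) - (Θ₁ * b i0 - Θ₂ * ν i0)) ≤ 0 := by
      intro j
      by_cases hj : j = i0
      · subst hj; simp
      · exact mul_nonpos_iff.mpr (Or.inl ⟨hwnn j, (sub_neg.mpr (hmax j hj)).le⟩)
    constructor
    · rw [key]; exact Finset.sum_nonpos fun j _ => hterm j
    constructor
    · intro hzero
      rw [key] at hzero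
      have hall := (Finset.sum_eq_zero_iff_of_nonpos (fun j _ => hterm j)).mp hzero
      have hwj : ∀ j : Fin N, j ≠ i0 → w j = 0 := by
        intro j hj
        have := hall j (Finset.mem_univ j)
        have hne : (Θ₁ * b j - Θ₂ * ν j) - (Θ₁ * b i0 - Θ₂ * ν i0) ≠ 0 :=
          ne_of_lt (sub_neg.mpr (hmax j hj))
        exact (mul_eq_zero.mp this).resolve_right hne
      have hw1 : w i0 = 1 := by
        rw [← hwsum, Finset.sum_eq_single i0 (fun j _ hj => hwj j hj) (by simp)]
      funext i
      rw [hE₁]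
      by_cases hi : i = i0
      · simp [hi, hw1]
      · simp [hi, hwj i hi]
    · intro hw
      subst hw
      rw [hE₁]
      have hb : (∑ j, b j * (if j = i0 then (1:ℝ) else 0)) = b i0 := by
        simp [mul_ite]
      have hv : (∑ j, ν j * (if j = i0 then (1:ℝ) else 0)) = ν i0 := by
        simp [mul_ite]
      simp only [hb, hv]
      ring
  · -- convergence part
    have hcont : ∀ i : Fin N, Continuous fun t => z t i := fun i =>
      continuous_iff_continuousAt.mpr fun t => (hz t i).continuousAt
    set g : Fin N → ℝ → ℝ := fun i t =>
      Θ₁ * (b i - ∑ j, b j * z t j) + Θ₂ * (-ν i + ∑ j, ν j * z t j) with hgdef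
    have hBcont : Continuous fun t => ∑ j, b j * z t j :=
      continuous_finset_sum _ fun j _ => continuous_const.mul (hcont j)
    have hVcont : Continuous fun t => ∑ j, ν j * z t j :=
      continuous_finset_sum _ fun j _ => continuous_const.mul (hcont j)
    have hgcont : ∀ i, Continuous (g i) := fun i => by
      rw [hgdef]
      exact (continuous_const.mul (continuous_const.sub hBcont)).add
        (continuous_const.mul (continuous_const.add hVcont))
    have hderiv : ∀ (t : ℝ) (i : Fin N),
        HasDerivAt (fun s => z s i) (g i t * z t i) t := by
      intro t i
      have h := hz t i
      rw [mul_comm] at h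
      exact h
    have hsol : ∀ (i : Fin N) (t : ℝ),
        z t i = z 0 i * Real.exp (∫ s in (0:ℝ)..t, g i s) :=
      fun i t => ode_exp_sol (fun s => z s i) (g i) (hgcont i) (fun u => hderiv u i) t
    -- sum conservation
    set h : ℝ → ℝ := fun t =>
      -(Θ₁ * (∑ j, b j * z t j) - Θ₂ * (∑ j, ν j * z t j)) with hhdef
    have hhcont : Continuous h := by
      rw [hhdef]
      exact ((continuous_const.mul hBcont).sub (continuous_const.mul hVcont)).neg
    have key : ∀ t, (∑ i, g i t * z t i) = h t * ((∑ i, z t i) - 1) := by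
      intro t
      have e : (∑ i, g i t * z t i)
          = ∑ i, (Θ₁ * (b i * z t i) - (Θ₁ * (∑ j, b j * z t j)) * z t i
            - Θ₂ * (ν i * z t i) + (Θ₂ * (∑ j, ν j * z t j)) * z t i) :=
        Finset.sum_congr rfl fun i _ => by simp only [hgdef]; ring
      rw [e, Finset.sum_add_distrib, Finset.sum_sub_distrib, Finset.sum_sub_distrib]
      simp only [← Finset.mul_sum]
      simp only [hhdef]
      ring
    have hy : ∀ t, HasDerivAt (fun u => (∑ i, z u i) - 1)
        (h t * ((∑ i, z t i) - 1)) t := by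
      intro t
      have hsum : HasDerivAt (fun u => ∑ i, z u i) (∑ i, g i t * z t i) t :=
        HasDerivAt.fun_sum fun i _ => hderiv t i
      have hsum' := hsum.sub_const (1 : ℝ)
      rwa [key t] at hsum'
    have hS1 : ∀ t, (∑ i, z t i) = 1 := by
      intro t
      have := ode_exp_sol (fun u => (∑ i, z u i) - 1) h hhcont hy t
      rw [hsum0] at this
      simp at this
      linarith
    have znn : ∀ (t : ℝ) (i : Fin N), 0 ≤ z t i := by
      intro t i
      rw [hsol i t]
      exact mul_nonneg (hnn0 i) (Real.exp_pos _).le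
    have zle1 : ∀ t, z t i0 ≤ 1 := by
      intro t
      rw [← hS1 t]
      exact Finset.single_le_sum (fun i _ => znn t i) (Finset.mem_univ i0)
    have hexple : ∀ t, Real.exp (∫ s in (0:ℝ)..t, g i0 s) ≤ 1 / z 0 i0 := by
      intro t
      have h1 : z 0 i0 * Real.exp (∫ s in (0:ℝ)..t, g i0 s) ≤ 1 := by
        rw [← hsol i0 t]; exact zle1 t
      rw [le_div_iff₀ hpos0, mul_comm]
      exact h1
    -- decay of the other strains
    have hzj0 : ∀ j : Fin N, j ≠ i0 → Tendsto (fun t => z t j) atTop (nhds 0) := by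
      intro j hj
      set c : ℝ := (Θ₁ * b i0 - Θ₂ * ν i0) - (Θ₁ * b j - Θ₂ * ν j) with hcdef
      have hcpos : 0 < c := sub_pos.mpr (hmax j hj)
      have hgj : ∀ s, g j s = g i0 s - c := by
        intro s; simp only [hgdef, hcdef]; ring
      have hint : ∀ t : ℝ, (∫ s in (0:ℝ)..t, g j s)
          = (∫ s in (0:ℝ)..t, g i0 s) - c * t := by
        intro t
        rw [intervalIntegral.integral_congr (g := fun s => g i0 s - c)
          (fun s _ => hgj s)]
        rw [intervalIntegral.integral_sub ((hgcont i0).intervalIntegrable 0 t)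
          (intervalIntegrable_const)]
        rw [intervalIntegral.integral_const]
        simp [mul_comm]
      have hbound : ∀ t, z t j ≤ (z 0 j / z 0 i0) * Real.exp (-(c * t)) := by
        intro t
        rw [hsol j t, hint t, Real.exp_sub, Real.exp_neg]
        rw [div_eq_mul_inv, div_eq_mul_inv, mul_assoc]
        apply mul_le_mul_of_nonneg_left _ (hnn0 j)
        apply mul_le_mul_of_nonneg_right _ (by positivity)
        calc Real.exp (∫ s in (0:ℝ)..t, g i0 s) ≤ 1 / z 0 i0 := hexple t
          _ = (z 0 i0)⁻¹ := one_div _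
      have hexp0 : Tendsto (fun t : ℝ => Real.exp (-(c * t))) atTop (nhds 0) := by
        apply Real.tendsto_exp_atBot.comp
        have h1 : Tendsto (fun t : ℝ => c * t) atTop atTop :=
          Tendsto.const_mul_atTop hcpos tendsto_id
        exact tendsto_neg_atTop_atBot.comp h1
      have hub : Tendsto (fun t : ℝ => (z 0 j / z 0 i0) * Real.exp (-(c * t)))
          atTop (nhds 0) := by
        have := hexp0.const_mul (z 0 j / z 0 i0)
        simpa using this
      exact tendsto_of_tendsto_of_tendsto_of_le_of_le tendsto_const_nhds hub
        (fun t => znn t j) (fun t => hbound t)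
    have hsumtend : Tendsto (fun t => ∑ j ∈ Finset.univ.erase i0, z t j)
        atTop (nhds 0) := by
      have := tendsto_finset_sum (Finset.univ.erase i0)
        (fun j hjmem => hzj0 j (Finset.ne_of_mem_erase hjmem))
      simpa using this
    have hz0tend : Tendsto (fun t => z t i0) atTop (nhds 1) := by
      have heq : (fun t => z t i0)
          = fun t => 1 - ∑ j ∈ Finset.univ.erase i0, z t j := by
        funext t
        have := Finset.sum_erase_add Finset.univ (fun j => z t j)
          (Finset.mem_univ i0)
        rw [hS1 t] at this
        linarith
      rw [heq]
      have h1 : Tendsto (fun _ : ℝ => (1:ℝ)) atTop (nhds 1) := tendsto_const_nhds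
      have := h1.sub hsumtend
      simpa using this
    rw [tendsto_pi_nhds]
    intro i
    rw [hE₁]
    by_cases hi : i = i0
    · subst hi
      simpa using hz0tend
    · simp only [hi, if_false]
      exact hzj0 i hi
end
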